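/- Let W₁, W₂ : Y → [0,1] be two probability mass functions on a countable set Y, let Z ⊆ Y be a decoding set, and define the type I error P₁ = 1 − Σ_{y ∈ Z} W₁(y) and type II error P₂ = Σ_{y ∈ Z} W₂(y). Suppose there exist η ∈ [0,1] and a set F ⊆ Y such that W₁(y) − W₂(y) ≤ η·W₁(y) for all y ∈ Z ∩ F, and Σ_{y ∈ Z ∩ Fᶜ} W₁(y) ≤ η. Then P₁ + P₂ ≥ 1 − 2η. -/

import Mathlib

/-- Core converse argument for identification codes: if `W₁(y) − W₂(y) ≤ η W₁(y)`
on `Z ∩ F` and the `W₁`-mass of `Z ∩ Fᶜ` is at most `η`, then the sum of the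
type I and type II errors is at least `1 − 2η`. -/
theorem identification_error_sum_lower_bound {Y : Type*} [Countable Y]
    (W₁ W₂ : Y → ℝ) (hW₁ : ∀ y, 0 ≤ W₁ y) (hW₂ : ∀ y, 0 ≤ W₂ y)
    (hW₁sum : ∑' y : Y, W₁ y = 1) (hW₂sum : ∑' y : Y, W₂ y = 1)
    (Z F : Set Y) (η : ℝ) (hη0 : 0 ≤ η) (hη1 : η ≤ 1)
    (h1 : ∀ y ∈ Z ∩ F, W₁ y - W₂ y ≤ η * W₁ y)
    (h2 : ∑' y : (Z ∩ Fᶜ : Set Y), W₁ y ≤ η) :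
    1 - 2 * η ≤ (1 - ∑' y : Z, W₁ y) + ∑' y : Z, W₂ y := by
  have hS1 : Summable W₁ := by
    by_contra h
    rw [tsum_eq_zero_of_not_summable h] at hW₁sum
    norm_num at hW₁sum
  have hS2 : Summable W₂ := by
    by_contra h
    rw [tsum_eq_zero_of_not_summable h] at hW₂sum
    norm_num at hW₂sum
  -- summability on subtypes
  have hS1Z : Summable (fun y : Z => W₁ y) := hS1.subtype Z
  have hS2Z : Summable (fun y : Z => W₂ y) := hS2.subtype Z
  have hS1ZF : Summable (fun y : (Z ∩ F : Set Y) => W₁ y) := hS1.subtype _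
  have hS2ZF : Summable (fun y : (Z ∩ F : Set Y) => W₂ y) := hS2.subtype _
  have hS1ZFc : Summable (fun y : (Z ∩ Fᶜ : Set Y) => W₁ y) := hS1.subtype _
  -- split Z
  have hsplit : (∑' y : Z, W₁ y) = (∑' y : (Z ∩ F : Set Y), W₁ y) + ∑' y : (Z ∩ Fᶜ : Set Y), W₁ y := by
    have hZ : Z = (Z ∩ F) ∪ (Z ∩ Fᶜ) := (Set.inter_union_compl Z F).symm
    rw [tsum_congr_set_coe W₁ hZ, Summable.tsum_union_disjoint (f := W₁) (Set.disjoint_left.mpr (fun a h1 h2 => h2.2 h1.2)) hS1ZF hS1ZFc]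
  -- bound on Z∩F part
  have hZF : (∑' y : (Z ∩ F : Set Y), W₁ y) - (∑' y : (Z ∩ F : Set Y), W₂ y) ≤ η := by
    have hle : (∑' y : (Z ∩ F : Set Y), W₁ y) - (∑' y : (Z ∩ F : Set Y), W₂ y)
        ≤ η * ∑' y : (Z ∩ F : Set Y), W₁ y := by
      have := Summable.tsum_le_tsum (f := fun y : (Z ∩ F : Set Y) => W₁ y - W₂ y)
        (g := fun y : (Z ∩ F : Set Y) => η * W₁ y)
        (fun y => h1 y y.2) (hS1ZF.sub hS2ZF) (hS1ZF.mul_left η)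
      rwa [Summable.tsum_sub hS1ZF hS2ZF, tsum_mul_left] at this
    have hle2 : (∑' y : (Z ∩ F : Set Y), W₁ y) ≤ 1 := by
      rw [← hW₁sum]
      exact Summable.tsum_subtype_le W₁ _ hW₁ hS1
    nlinarith [tsum_nonneg (L := SummationFilter.unconditional _) (fun y : (Z ∩ F : Set Y) => hW₁ y)]
  -- W₂ on Z ≥ W₂ on Z∩F
  have hW2mono : (∑' y : (Z ∩ F : Set Y), W₂ y) ≤ ∑' y : Z, W₂ y := by
    have := Summable.tsum_le_tsum_of_inj (fun y : (Z ∩ F : Set Y) => (⟨y.1, y.2.1⟩ : Z))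
      (fun a b hab => Subtype.ext (by simpa [Subtype.ext_iff] using hab))
      (fun c _ => hW₂ c) (fun y => le_refl (W₂ y.1)) hS2ZF hS2Z
    simpa using this
  linarith
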